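/- Let Q ∈ ℤ[x_1,…,x_n] be an integral polynomial such that there is a constant C_V with |V_t(d)| ≤ C_V d^{n−1} for all integers d ≥ 1 and t ∈ ℤ. Then there is a constant C', depending only on n and C_V, such that for every integer d ≥ 1 and every t ∈ ℤ: ∑_{x ∈ ℤ^n} d · 1_{Q(x) ≡ t (mod d)} / ( d^n ( n^{1/2} + 1 + |x|/d )^{n+1} ) ≤ C', where |x| is the Euclidean norm of x. -/

import Mathlib

open scoped ENNReal BigOperators

noncomputable section

/-- `|V_λ(d)| = #{s ∈ (ℤ/dℤ)^n : Q(s) = λ}`. -/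
def Vcard (n : ℕ) (Q : MvPolynomial (Fin n) ℤ) (d : ℕ) (lam : ℤ) : ℕ :=
  Nat.card {s : Fin n → ZMod d //
    MvPolynomial.eval s (MvPolynomial.map (Int.castRingHom (ZMod d)) Q) = (lam : ZMod d)}

lemma tsum_pi_prod (w : ℤ → ℝ≥0∞) : ∀ m : ℕ,
    (∑' y : Fin m → ℤ, ∏ i, w (y i)) = (∑' k : ℤ, w k) ^ m := by
  intro m
  induction m with
  | zero =>
    rw [pow_zero]
    rw [tsum_eq_single (fun i => 0) (by intro b hb; exact absurd (Subsingleton.elim b _) hb)]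
    simp
  | succ m ih =>
    rw [← Equiv.tsum_eq (Fin.consEquiv (fun _ : Fin (m+1) => ℤ)), ENNReal.tsum_prod',
      pow_succ', ← ih, ← ENNReal.tsum_mul_right]
    refine tsum_congr fun a => ?_
    rw [← ENNReal.tsum_mul_left]
    refine tsum_congr fun b => ?_
    simp only [Fin.consEquiv_apply]
    rw [Fin.prod_univ_succ, Fin.cons_zero]
    exact congrArg _ (Finset.prod_congr rfl fun i _ => by rw [Fin.cons_succ])

lemma ofReal_prod {m : ℕ} (f : Fin m → ℝ) (hf : ∀ i, 0 ≤ f i) :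
    ENNReal.ofReal (∏ i, f i) = ∏ i, ENNReal.ofReal (f i) := by
  induction m with
  | zero => simp
  | succ m ih =>
    rw [Fin.prod_univ_succ, Fin.prod_univ_succ, ENNReal.ofReal_mul (hf 0),
      ih (fun i => f i.succ) (fun i => hf i.succ)]

def resEquiv (n d : ℕ) [NeZero d] : ((Fin n → ZMod d) × (Fin n → ℤ)) ≃ (Fin n → ℤ) where
  toFun p := fun i => ((p.1 i).val : ℤ) + d * p.2 i
  invFun x := (fun i => ((x i : ℤ) : ZMod d), fun i => x i / d)
  left_inv p := by
    ext i
    · show (((((p.1 i).val : ℤ) + d * p.2 i : ℤ)) : ZMod d) = p.1 i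
      push_cast
      simp [ZMod.natCast_self, ZMod.natCast_rightInverse (p.1 i)]
    · show (((p.1 i).val : ℤ) + d * p.2 i) / d = p.2 i
      rw [Int.add_mul_ediv_left _ _ (by exact_mod_cast (NeZero.ne d)),
        Int.ediv_eq_zero_of_lt (by positivity) (by exact_mod_cast ZMod.val_lt (p.1 i)), zero_add]
  right_inv x := by
    funext i
    show ((((x i : ZMod d)).val : ℤ) + d * (x i / d)) = x i
    rw [ZMod.val_intCast, Int.emod_add_mul_ediv]

lemma cast_eval (n d : ℕ) (Q : MvPolynomial (Fin n) ℤ) (x : Fin n → ℤ) :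
    ((MvPolynomial.eval x Q : ℤ) : ZMod d) =
      MvPolynomial.eval (fun i => ((x i : ℤ) : ZMod d))
        (MvPolynomial.map (Int.castRingHom (ZMod d)) Q) := by
  rw [MvPolynomial.eval_map]
  rw [show ((MvPolynomial.eval x Q : ℤ) : ZMod d)
      = (Int.castRingHom (ZMod d)) (MvPolynomial.eval₂ (RingHom.id ℤ) x Q) from rfl]
  rw [MvPolynomial.eval₂_comp_left (Int.castRingHom (ZMod d))]
  simp [Function.comp]
  rfl

lemma summable_aux {q : ℝ} (hq : 1 < q) : Summable (fun k : ℤ => ((1:ℝ) + |(k:ℝ)|) ^ (-q)) := by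
  have hnat : Summable (fun m : ℕ => ((1:ℝ) + (m:ℝ)) ^ (-q)) := by
    have h1 : Summable (fun m : ℕ => (((m:ℝ) + 1) ^ q)⁻¹) :=
      (summable_nat_add_iff 1).mpr (Real.summable_nat_rpow_inv.mpr hq) |>.congr
        (fun m => by push_cast; ring_nf)
    refine h1.congr fun m => ?_
    rw [← Real.rpow_neg (by positivity)]
    ring_nf
  refine Summable.of_nat_of_neg (hnat.congr fun m => by norm_num) (hnat.congr fun m => by norm_num)

lemma norm_bound (n : ℕ) (d : ℕ) (hd : 1 ≤ d) (a : Fin n → ℕ) (ha : ∀ i, a i < d)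
    (y : Fin n → ℤ) :
    1 + Real.sqrt (∑ i, ((y i : ℝ))^2) ≤
      Real.sqrt n + 1 + Real.sqrt (∑ i, (((a i : ℝ) + d * y i))^2) / d := by
  have hd0 : (0:ℝ) < d := by exact_mod_cast hd
  set X : EuclideanSpace ℝ (Fin n) := WithLp.toLp 2 (fun i => ((a i : ℝ) + d * y i)) with hXdef
  set Y : EuclideanSpace ℝ (Fin n) := WithLp.toLp 2 (fun i => (y i : ℝ)) with hYdef
  set Sv : EuclideanSpace ℝ (Fin n) := WithLp.toLp 2 (fun i => (a i : ℝ)) with hSdef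
  have hX : X = Sv + (d:ℝ) • Y := by
    ext i
    show ((a i : ℝ) + d * y i) = (a i : ℝ) + (d:ℝ) • (y i : ℝ)
    simp
  have hnX : Real.sqrt (∑ i, (((a i : ℝ) + d * y i))^2) = ‖X‖ := by
    rw [EuclideanSpace.norm_eq]
    congr 1
    refine Finset.sum_congr rfl fun i _ => by rw [Real.norm_eq_abs, sq_abs]
  have hnY : Real.sqrt (∑ i, ((y i : ℝ))^2) = ‖Y‖ := by
    rw [EuclideanSpace.norm_eq]
    congr 1
    refine Finset.sum_congr rfl fun i _ => by rw [Real.norm_eq_abs, sq_abs]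
  have hSv : ‖Sv‖ ≤ Real.sqrt n * d := by
    rw [EuclideanSpace.norm_eq]
    have : ∑ i, ‖Sv i‖^2 ≤ ∑ _i : Fin n, (d:ℝ)^2 := by
      refine Finset.sum_le_sum fun i _ => ?_
      rw [Real.norm_eq_abs, sq_abs]
      have h1 : (Sv i) ≤ (d:ℝ) := by
        simp only [hSdef]
        exact_mod_cast (ha i).le
      have h0 : (0:ℝ) ≤ Sv i := by simp [hSdef]
      nlinarith
    calc Real.sqrt (∑ i, ‖Sv i‖^2) ≤ Real.sqrt (n * (d:ℝ)^2) := by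
          apply Real.sqrt_le_sqrt; simpa using this
      _ = Real.sqrt n * d := by
          rw [Real.sqrt_mul (by positivity), Real.sqrt_sq hd0.le]
  have key : (d:ℝ) * ‖Y‖ ≤ ‖X‖ + ‖Sv‖ := by
    have : ‖(d:ℝ) • Y‖ = ‖X - Sv‖ := by rw [hX]; congr 1; abel
    have h2 : ‖(d:ℝ) • Y‖ = d * ‖Y‖ := by
      rw [norm_smul, Real.norm_eq_abs, abs_of_pos hd0]
    rw [← h2, this]
    exact norm_sub_le _ _
  rw [hnX, hnY]
  have h3 : ‖Y‖ - Real.sqrt (n:ℝ) ≤ ‖X‖ / d := by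
    rw [le_div_iff₀ hd0]
    nlinarith [key, hSv]
  linarith [h3]

lemma prod_bound (n : ℕ) (hn : 1 ≤ n) (y : Fin n → ℤ) :
    ∏ i, ((1:ℝ) + |(y i : ℝ)|) ^ ((n+1:ℝ)/n) ≤
      (1 + Real.sqrt (∑ i, ((y i : ℝ))^2)) ^ (n+1) := by
  have hn0 : (0:ℝ) < n := by exact_mod_cast hn
  set N := Real.sqrt (∑ i, ((y i : ℝ))^2) with hN
  have hN0 : 0 ≤ N := Real.sqrt_nonneg _
  have hcoord : ∀ i, |(y i : ℝ)| ≤ N := by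
    intro i
    rw [← Real.sqrt_sq_eq_abs]
    exact Real.sqrt_le_sqrt (Finset.single_le_sum (f := fun j => ((y j : ℝ))^2)
      (fun j _ => sq_nonneg _) (Finset.mem_univ i))
  have hprod : ∏ i, ((1:ℝ) + |(y i : ℝ)|) ≤ (1 + N) ^ n := by
    calc ∏ i, ((1:ℝ) + |(y i : ℝ)|) ≤ ∏ _i : Fin n, (1 + N) :=
          Finset.prod_le_prod (fun i _ => by positivity)
            (fun i _ => by linarith [hcoord i])
      _ = (1 + N) ^ n := by rw [Finset.prod_const, Finset.card_univ, Fintype.card_fin]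
  have hq0 : (0:ℝ) ≤ (n+1:ℝ)/n := by positivity
  have step := Real.rpow_le_rpow (Finset.prod_nonneg fun i _ => by positivity) hprod hq0
  rw [Real.finset_prod_rpow _ _ (fun i _ => by positivity) _]
  refine step.trans_eq ?_
  rw [← Real.rpow_natCast (1 + N) n, ← Real.rpow_mul (by positivity),
    show (n:ℝ) * ((n+1:ℝ)/n) = ((n+1:ℕ):ℝ) by push_cast; field_simp,
    Real.rpow_natCast]

lemma term_bound (n d : ℕ) (hn : 1 ≤ n) (hd : 1 ≤ d) (a : Fin n → ℕ) (ha : ∀ i, a i < d)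
    (y : Fin n → ℤ) :
    (d:ℝ) * 1 / ((d:ℝ)^n *
        (Real.sqrt n + 1 + Real.sqrt (∑ i, (((a i : ℝ) + d * y i))^2) / d) ^ (n+1))
      ≤ ((d:ℝ)/(d:ℝ)^n) * ∏ i, ((1:ℝ) + |(y i : ℝ)|) ^ (-((n+1:ℝ)/n)) := by
  have hd0 : (0:ℝ) < d := by exact_mod_cast hd
  set A : ℝ := Real.sqrt n + 1 + Real.sqrt (∑ i, (((a i : ℝ) + d * y i))^2) / d with hA
  set B : ℝ := 1 + Real.sqrt (∑ i, ((y i : ℝ))^2) with hB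
  have hB1 : (1:ℝ) ≤ B := by rw [hB]; nlinarith [Real.sqrt_nonneg (∑ i, ((y i : ℝ))^2)]
  have hBA : B ≤ A := norm_bound n d hd a ha y
  have hPq : ∏ i, ((1:ℝ) + |(y i : ℝ)|) ^ ((n+1:ℝ)/n) ≤ A ^ (n+1) :=
    (prod_bound n hn y).trans (pow_le_pow_left₀ (by linarith) hBA _)
  have hPq0 : (0:ℝ) < ∏ i, ((1:ℝ) + |(y i : ℝ)|) ^ ((n+1:ℝ)/n) :=
    Finset.prod_pos fun i _ => Real.rpow_pos_of_pos (by positivity) _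
  have hinv : ∏ i, ((1:ℝ) + |(y i : ℝ)|) ^ (-((n+1:ℝ)/n))
      = (∏ i, ((1:ℝ) + |(y i : ℝ)|) ^ ((n+1:ℝ)/n))⁻¹ := by
    rw [← Finset.prod_inv_distrib]
    exact Finset.prod_congr rfl fun i _ => Real.rpow_neg (by positivity) _
  rw [mul_one, div_mul_eq_div_div, div_eq_mul_inv ((d:ℝ)/(d:ℝ)^n), hinv]
  gcongr

lemma inner_bound (n d : ℕ) (hn : 1 ≤ n) (hd : 1 ≤ d) (a : Fin n → ℕ) (ha : ∀ i, a i < d) :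
    (∑' y : Fin n → ℤ, ENNReal.ofReal ((d:ℝ) * 1 / ((d:ℝ)^n *
        (Real.sqrt n + 1 + Real.sqrt (∑ i, (((a i : ℝ) + d * y i))^2) / d) ^ (n+1))))
      ≤ ENNReal.ofReal ((d:ℝ)/(d:ℝ)^n) *
        (∑' k : ℤ, ENNReal.ofReal (((1:ℝ) + |(k:ℝ)|) ^ (-((n+1:ℝ)/n))))^n := by
  have hq : (0:ℝ) ≤ (d:ℝ)/(d:ℝ)^n := by positivity
  calc (∑' y : Fin n → ℤ, ENNReal.ofReal ((d:ℝ) * 1 / ((d:ℝ)^n *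
        (Real.sqrt n + 1 + Real.sqrt (∑ i, (((a i : ℝ) + d * y i))^2) / d) ^ (n+1))))
      ≤ ∑' y : Fin n → ℤ, ENNReal.ofReal (((d:ℝ)/(d:ℝ)^n)
          * ∏ i, ((1:ℝ) + |(y i : ℝ)|) ^ (-((n+1:ℝ)/n))) :=
        ENNReal.tsum_le_tsum fun y =>
          ENNReal.ofReal_le_ofReal (term_bound n d hn hd a ha y)
    _ = ∑' y : Fin n → ℤ, ENNReal.ofReal ((d:ℝ)/(d:ℝ)^n)
          * ∏ i, ENNReal.ofReal (((1:ℝ) + |(y i : ℝ)|) ^ (-((n+1:ℝ)/n))) := by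
        refine tsum_congr fun y => ?_
        rw [ENNReal.ofReal_mul hq, ofReal_prod _ (fun i => Real.rpow_nonneg (by positivity) _)]
    _ = ENNReal.ofReal ((d:ℝ)/(d:ℝ)^n) * ∑' y : Fin n → ℤ,
          ∏ i, ENNReal.ofReal (((1:ℝ) + |(y i : ℝ)|) ^ (-((n+1:ℝ)/n))) :=
        ENNReal.tsum_mul_left
    _ = ENNReal.ofReal ((d:ℝ)/(d:ℝ)^n) *
        (∑' k : ℤ, ENNReal.ofReal (((1:ℝ) + |(k:ℝ)|) ^ (-((n+1:ℝ)/n))))^n := by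
        rw [tsum_pi_prod (fun k : ℤ => ENNReal.ofReal (((1:ℝ) + |(k:ℝ)|) ^ (-((n+1:ℝ)/n)))) n]

theorem stmt17 (n : ℕ) (hn : 1 ≤ n) (CV : ℝ) :
    ∃ C' : ℝ, 0 < C' ∧
      ∀ Q : MvPolynomial (Fin n) ℤ,
        (∀ d : ℕ, 1 ≤ d → ∀ t : ℤ, (Vcard n Q d t : ℝ) ≤ CV * (d : ℝ) ^ (n - 1)) →
        ∀ d : ℕ, 1 ≤ d → ∀ t : ℤ,
          (∑' x : Fin n → ℤ, ENNReal.ofReal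
              ((d : ℝ) * (if (d : ℤ) ∣ (MvPolynomial.eval x Q - t) then 1 else 0) /
                ((d : ℝ) ^ n *
                  (Real.sqrt n + 1 + Real.sqrt (∑ i, ((x i : ℝ)) ^ 2) / (d : ℝ)) ^ (n + 1))))
            ≤ ENNReal.ofReal C' := by
  classical
  have hn0 : (0:ℝ) < n := by exact_mod_cast hn
  set q : ℝ := (n+1:ℝ)/n with hqdef
  have hq1 : 1 < q := by rw [hqdef, lt_div_iff₀ hn0]; linarith
  have hsum : Summable (fun k : ℤ => ((1:ℝ) + |(k:ℝ)|) ^ (-q)) := summable_aux hq1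
  set Sr : ℝ := ∑' k : ℤ, ((1:ℝ) + |(k:ℝ)|) ^ (-q) with hSrdef
  have hSr0 : 0 ≤ Sr := tsum_nonneg fun k => Real.rpow_nonneg (by positivity) _
  refine ⟨max CV 1 * (Sr ^ n + 1),
    mul_pos (lt_of_lt_of_le one_pos (le_max_right _ _)) (by positivity), ?_⟩
  intro Q hQ d hd t
  haveI : NeZero d := ⟨by omega⟩
  set f : (Fin n → ℤ) → ℝ≥0∞ := fun x => ENNReal.ofReal
      ((d : ℝ) * (if (d : ℤ) ∣ (MvPolynomial.eval x Q - t) then 1 else 0) /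
        ((d : ℝ) ^ n *
          (Real.sqrt n + 1 + Real.sqrt (∑ i, ((x i : ℝ)) ^ 2) / (d : ℝ)) ^ (n + 1))) with hfdef
  set P : (Fin n → ZMod d) → Prop := fun s =>
    MvPolynomial.eval s (MvPolynomial.map (Int.castRingHom (ZMod d)) Q) = (t : ZMod d)
    with hPdef
  have hST : (∑' k : ℤ, ENNReal.ofReal (((1:ℝ) + |(k:ℝ)|) ^ (-q))) = ENNReal.ofReal Sr := by
    rw [hSrdef, ENNReal.ofReal_tsum_of_nonneg (fun k => Real.rpow_nonneg (by positivity) _) hsum]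
  set K : ℝ≥0∞ := ENNReal.ofReal ((d:ℝ)/(d:ℝ)^n) * (ENNReal.ofReal Sr)^n with hKdef
  -- the divisibility condition only depends on the residue class
  have hdvd_iff : ∀ s : Fin n → ZMod d, ∀ y : Fin n → ℤ,
      ((d : ℤ) ∣ (MvPolynomial.eval (resEquiv n d (s, y)) Q - t)) ↔ P s := by
    intro s y
    rw [← ZMod.intCast_zmod_eq_zero_iff_dvd, Int.cast_sub, sub_eq_zero, cast_eval]
    have hs : (fun i => (((resEquiv n d (s, y)) i : ℤ) : ZMod d)) = s := by
      have := congrArg Prod.fst ((resEquiv n d).symm_apply_apply (s, y))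
      exact this
    rw [hs]
  have hmain : ∀ s : Fin n → ZMod d,
      (∑' y : Fin n → ℤ, f (resEquiv n d (s, y))) ≤ if P s then K else 0 := by
    intro s
    by_cases hP : P s
    · rw [if_pos hP]
      have hterm : ∀ y : Fin n → ℤ, f (resEquiv n d (s, y)) =
          ENNReal.ofReal ((d:ℝ) * 1 / ((d:ℝ)^n *
            (Real.sqrt n + 1 +
              Real.sqrt (∑ i, ((((s i).val : ℝ) + d * y i))^2) / d) ^ (n+1))) := by
        intro y
        rw [hfdef]
        simp only
        rw [if_pos ((hdvd_iff s y).mpr hP)]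
        have hsum2 : (∑ i, (((resEquiv n d (s, y)) i : ℝ))^2)
            = ∑ i, (((s i).val : ℝ) + d * y i)^2 := by
          refine Finset.sum_congr rfl fun i _ => ?_
          show ((((s i).val : ℤ) + d * y i : ℤ) : ℝ)^2 = (((s i).val : ℝ) + d * y i)^2
          push_cast
          ring
        rw [hsum2]
      calc (∑' y : Fin n → ℤ, f (resEquiv n d (s, y)))
          = ∑' y : Fin n → ℤ, ENNReal.ofReal ((d:ℝ) * 1 / ((d:ℝ)^n *
              (Real.sqrt n + 1 +
                Real.sqrt (∑ i, ((((s i).val : ℝ) + d * y i))^2) / d) ^ (n+1))) :=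
            tsum_congr hterm
        _ ≤ ENNReal.ofReal ((d:ℝ)/(d:ℝ)^n) *
              (∑' k : ℤ, ENNReal.ofReal (((1:ℝ) + |(k:ℝ)|) ^ (-q)))^n :=
            inner_bound n d hn hd (fun i => (s i).val) (fun i => ZMod.val_lt _)
        _ = K := by rw [hST, hKdef]
    · rw [if_neg hP]
      refine le_of_eq (ENNReal.tsum_eq_zero.mpr fun y => ?_)
      rw [hfdef]
      simp only
      rw [if_neg (fun hc => hP ((hdvd_iff s y).mp hc))]
      simp
  calc (∑' x : Fin n → ℤ, f x)
      = ∑' p : (Fin n → ZMod d) × (Fin n → ℤ), f (resEquiv n d p) :=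
        (Equiv.tsum_eq (resEquiv n d) f).symm
    _ = ∑' s : Fin n → ZMod d, ∑' y : Fin n → ℤ, f (resEquiv n d (s, y)) :=
        ENNReal.tsum_prod'
    _ = ∑ s : Fin n → ZMod d, ∑' y : Fin n → ℤ, f (resEquiv n d (s, y)) :=
        tsum_fintype _
    _ ≤ ∑ s : Fin n → ZMod d, (if P s then K else 0) :=
        Finset.sum_le_sum fun s _ => hmain s
    _ = (Finset.univ.filter P).card • K := by
        rw [← Finset.sum_filter, Finset.sum_const]
    _ = (Vcard n Q d t : ℝ≥0∞) * K := by
        rw [nsmul_eq_mul]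
        congr 1
        rw [Vcard, Nat.card_eq_fintype_card, Fintype.card_subtype]
    _ ≤ ENNReal.ofReal (CV * (d:ℝ)^(n-1)) * K := by
        gcongr
        rw [← ENNReal.ofReal_natCast (Vcard n Q d t)]
        exact ENNReal.ofReal_le_ofReal (hQ d hd t)
    _ = ENNReal.ofReal ((CV * (d:ℝ)^(n-1)) * ((d:ℝ)/(d:ℝ)^n)) * (ENNReal.ofReal Sr)^n := by
        rw [hKdef, ← mul_assoc, ← ENNReal.ofReal_mul' (by positivity)]
    _ = ENNReal.ofReal CV * (ENNReal.ofReal Sr)^n := by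
        congr 2
        have hd0 : (0:ℝ) < d := by exact_mod_cast hd
        have hdn : ((d:ℝ)^(n-1)) * ((d:ℝ)/(d:ℝ)^n) = 1 := by
          rw [div_eq_mul_inv, ← mul_assoc, ← pow_succ, show n - 1 + 1 = n by omega]
          field_simp
        calc (CV * (d:ℝ)^(n-1)) * ((d:ℝ)/(d:ℝ)^n)
            = CV * (((d:ℝ)^(n-1)) * ((d:ℝ)/(d:ℝ)^n)) := by ring
          _ = CV := by rw [hdn, mul_one]
    _ ≤ ENNReal.ofReal (max CV 1) * ENNReal.ofReal (Sr^n) := by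
        rw [← ENNReal.ofReal_pow hSr0]
        gcongr
        exact le_max_left _ _
    _ = ENNReal.ofReal (max CV 1 * Sr^n) := by
        rw [← ENNReal.ofReal_mul (le_trans zero_le_one (le_max_right _ _))]
    _ ≤ ENNReal.ofReal (max CV 1 * (Sr ^ n + 1)) := by
        refine ENNReal.ofReal_le_ofReal ?_
        have h1 : (0:ℝ) ≤ max CV 1 := le_trans zero_le_one (le_max_right _ _)
        nlinarith [pow_nonneg hSr0 n]
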